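/- Let Y_1, …, Y_m be i.i.d. isotropic log-concave random vectors in ℝ^n, let A = (A_{ij}) be a deterministic m×n real matrix, and set X_{ij} = A_{ij} Y_{ij}, with rows X_i = (X_{ij})_{j≤n}. Then there exists a universal constant C > 0 such that for all p, q ≥ 2, sup_{t ∈ ℝ^n, ‖t‖_{p'} ≤ 1} ( Σ_{i=1}^m 𝔼 |⟨X_i, t⟩|^q )^{1/q} ≤ C · q · max_{j≤n} ‖A^{(j)}‖_q, where p' is the Hölder conjugate of p, ⟨·,·⟩ is the standard inner product on ℝ^n, and A^{(j)} is the j-th column of A. -/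

import Mathlib

open MeasureTheory ProbabilityTheory Real
open scoped Pointwise

noncomputable section

/-- The `ℓ_r` norm of a vector indexed by a finite type. -/
def pNorm {ι : Type*} [Fintype ι] (r : ℝ) (x : ι → ℝ) : ℝ :=
  (∑ k, |x k| ^ r) ^ (1 / r)

/-- The operator norm of an `m × n` matrix from `ℓ_{p'}^n` to `ℓ_q^m`. -/
def opNorm {m n : ℕ} (p' q : ℝ) (A : Fin m → Fin n → ℝ) : ℝ :=
  sSup {c : ℝ | ∃ t : Fin n → ℝ, pNorm p' t ≤ 1 ∧ c = pNorm q (fun i => ∑ j, A i j * t j)}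

/-- A random vector is log-concave if
`P(Z ∈ λK + (1-λ)L) ≥ P(Z ∈ K)^λ P(Z ∈ L)^(1-λ)` for all compact nonempty `K, L`. -/
def IsLogConcave {Ω ι : Type*} [MeasurableSpace Ω] [Fintype ι] (P : Measure Ω)
    (Z : Ω → (ι → ℝ)) : Prop :=
  ∀ K L : Set (ι → ℝ), K.Nonempty → L.Nonempty → IsCompact K → IsCompact L →
    ∀ lam : ℝ, lam ∈ Set.Icc (0 : ℝ) 1 →
      P {ω | Z ω ∈ K} ^ lam * P {ω | Z ω ∈ L} ^ (1 - lam) ≤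
        P {ω | Z ω ∈ lam • K + (1 - lam) • L}

/-- A random vector is isotropic if it is centred and its covariance matrix is the identity. -/
def IsIsotropic {Ω ι : Type*} [MeasurableSpace Ω] [Fintype ι] [DecidableEq ι] (P : Measure Ω)
    (Z : Ω → (ι → ℝ)) : Prop :=
  (∀ i, ∫ ω, Z ω i ∂P = 0) ∧
    ∀ i j, ∫ ω, Z ω i * Z ω j ∂P = if i = j then 1 else 0

/-- A random vector is unconditional if flipping the signs of any subset of its coordinates
does not change its distribution. -/
def IsUnconditional {Ω ι : Type*} [MeasurableSpace Ω] [Fintype ι] (P : Measure Ω)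
    (Z : Ω → (ι → ℝ)) : Prop :=
  ∀ η : ι → ℝ, (∀ k, η k = 1 ∨ η k = -1) →
    IdentDistrib Z (fun ω k => η k * Z ω k) P P

/-- Membership in the unit ball of the dual norm of `ℓ_p`, i.e. `‖t‖_{p'} ≤ 1` where
`p'` is the Hölder conjugate of `p` (this also makes sense for `p = 1`, where `p' = ∞`). -/
def inDualBall {ι : Type*} [Fintype ι] (p : ℝ) (t : ι → ℝ) : Prop :=
  ∀ x : ι → ℝ, pNorm p x ≤ 1 → |∑ i, t i * x i| ≤ 1

open Set

variable {Ω : Type} [MeasurableSpace Ω] {n : ℕ} {P : Measure Ω} [IsProbabilityMeasure P]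
  {Y : Ω → Fin n → ℝ} {s : Fin n → ℝ}

lemma jensen_aux {n : ℕ} (w x : Fin n → ℝ) (hw : ∀ j, 0 ≤ w j) (hx : ∀ j, 0 ≤ x j)
    (hw1 : ∑ j, w j ≤ 1) {r : ℝ} (hr : 1 ≤ r) :
    (∑ j, w j * x j) ^ r ≤ ∑ j, w j * (x j) ^ r := by
  rcases eq_or_lt_of_le (Finset.sum_nonneg (fun j _ => hw j)) with h0 | hT
  · have hz : ∀ j, w j = 0 := by
      intro j
      have := Finset.sum_eq_zero_iff_of_nonneg (fun j _ => hw j) |>.mp h0.symm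
      exact this j (Finset.mem_univ j)
    simp only [hz, zero_mul, Finset.sum_const_zero]
    rw [Real.zero_rpow (by linarith)]
  · set T := ∑ j, w j with hT_def
    have key := Real.rpow_arith_mean_le_arith_mean_rpow Finset.univ
      (fun j => w j / T) x (fun j _ => div_nonneg (hw j) hT.le)
      (by rw [← Finset.sum_div]; field_simp; exact hT_def.symm) (fun j _ => hx j) hr
    have h1 : ∑ j, (w j / T) * x j = (∑ j, w j * x j) / T := by
      rw [Finset.sum_div]; congr 1; ext j; ring
    have h2 : ∑ j, (w j / T) * x j ^ r = (∑ j, w j * x j ^ r) / T := by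
      rw [Finset.sum_div]; congr 1; ext j; ring
    rw [h1, h2, Real.div_rpow (Finset.sum_nonneg fun j _ => mul_nonneg (hw j) (hx j)) hT.le] at key
    have hsum_nonneg : 0 ≤ ∑ j, w j * x j := Finset.sum_nonneg fun j _ => mul_nonneg (hw j) (hx j)
    have hTr : T ^ r ≤ T := by
      calc T ^ r ≤ T ^ (1:ℝ) := Real.rpow_le_rpow_of_exponent_ge hT hw1 hr
      _ = T := Real.rpow_one T
    calc (∑ j, w j * x j) ^ r
        = ((∑ j, w j * x j) ^ r / T) * T := by field_simp
      _ ≤ ((∑ j, w j * x j) ^ r / T ^ r) * T := by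
          apply mul_le_mul_of_nonneg_right _ hT.le
          exact div_le_div_of_nonneg_left (Real.rpow_nonneg hsum_nonneg r)
            (Real.rpow_pos_of_pos hT r) hTr
      _ ≤ ((∑ j, w j * x j ^ r) / T) * T := mul_le_mul_of_nonneg_right key hT.le
      _ = ∑ j, w j * x j ^ r := by field_simp

lemma prod_integrable {Ω : Type} [MeasurableSpace Ω] {n : ℕ} (P : Measure Ω)
    {Y : Ω → Fin n → ℝ} (hY : Measurable Y)
    (hiso : ∀ i j, ∫ ω, Y ω i * Y ω j ∂P = if i = j then 1 else 0) (j k : Fin n) :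
    Integrable (fun ω => Y ω j * Y ω k) P := by
  have hm : ∀ a : Fin n, Measurable (fun ω => Y ω a) := fun a => (measurable_pi_apply a).comp hY
  have hsq : ∀ a : Fin n, Integrable (fun ω => Y ω a * Y ω a) P := by
    intro a
    by_contra hni
    have := integral_undef hni
    rw [hiso a a] at this
    simp at this
  refine Integrable.mono' (((hsq j).add (hsq k)).const_mul (1/2)) ((hm j).mul (hm k)).aestronglyMeasurable ?_
  filter_upwards with ω
  have h2 : 2 * |Y ω j| * |Y ω k| ≤ |Y ω j|^2 + |Y ω k|^2 := two_mul_le_add_sq _ _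
  have : ‖Y ω j * Y ω k‖ = |Y ω j| * |Y ω k| := by rw [Real.norm_eq_abs, abs_mul]
  rw [this]
  simp only [Pi.add_apply]
  nlinarith [sq_abs (Y ω j), sq_abs (Y ω k)]

lemma sq_sum_integral {Ω : Type} [MeasurableSpace Ω] {n : ℕ} (P : Measure Ω)
    {Y : Ω → Fin n → ℝ} (hY : Measurable Y)
    (hiso : ∀ i j, ∫ ω, Y ω i * Y ω j ∂P = if i = j then 1 else 0) (s : Fin n → ℝ) :
    Integrable (fun ω => (∑ j, s j * Y ω j)^2) P ∧
    ∫ ω, (∑ j, s j * Y ω j)^2 ∂P = ∑ j, (s j)^2 := by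
  have hexp : ∀ ω, (∑ j, s j * Y ω j)^2 = ∑ j, ∑ k, (s j * s k) * (Y ω j * Y ω k) := by
    intro ω
    rw [sq, Finset.sum_mul_sum]
    congr 1; ext j; congr 1; ext k; ring
  have hint : ∀ j k : Fin n, Integrable (fun ω => (s j * s k) * (Y ω j * Y ω k)) P :=
    fun j k => (prod_integrable P hY hiso j k).const_mul _
  constructor
  · have : Integrable (fun ω => ∑ j, ∑ k, (s j * s k) * (Y ω j * Y ω k)) P :=
      integrable_finset_sum _ (fun j _ => integrable_finset_sum _ (fun k _ => hint j k))
    exact this.congr (by filter_upwards with ω using (hexp ω).symm)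
  · calc ∫ ω, (∑ j, s j * Y ω j)^2 ∂P
        = ∫ ω, ∑ j, ∑ k, (s j * s k) * (Y ω j * Y ω k) ∂P := by
          congr 1; ext ω; exact hexp ω
      _ = ∑ j, ∑ k, (s j * s k) * ∫ ω, Y ω j * Y ω k ∂P := by
          rw [integral_finset_sum _ (fun j _ => integrable_finset_sum _ (fun k _ => hint j k))]
          congr 1; ext j
          rw [integral_finset_sum _ (fun k _ => hint j k)]
          congr 1; ext k
          exact integral_const_mul _ _
      _ = ∑ j, (s j)^2 := by
          simp only [hiso, mul_ite, mul_one, mul_zero]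
          simp [sq]

lemma borell_core (hY : Measurable Y) (hlc : IsLogConcave P Y) {σ : ℝ} (hσ : 0 < σ)
    (hs2 : ∑ j, (s j)^2 = σ^2)
    (hA : (P {ω | 2*σ ≤ |∑ j, s j * Y ω j|}).toReal ≤ 1/4)
    (hB : 3/4 ≤ (P {ω | |∑ j, s j * Y ω j| ≤ 2*σ}).toReal)
    {t : ℝ} (ht : 1 ≤ t) :
    (P {ω | t*(2*σ) ≤ |∑ j, s j * Y ω j|}).toReal ≤ (1/3 : ℝ) ^ ((t+1)/2) := by
  have hcont : Continuous (fun x : Fin n → ℝ => ∑ j, s j * x j) :=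
    continuous_finset_sum _ fun j _ => continuous_const.mul (continuous_apply j)
  set f : (Fin n → ℝ) → ℝ := fun x => ∑ j, s j * x j with hf
  set lam : ℝ := 2/(t+1) with hlam_def
  have ht1 : (0:ℝ) < t + 1 := by linarith
  have hlam_pos : 0 < lam := by positivity
  have hlam_le : lam ≤ 1 := by rw [hlam_def, div_le_one ht1]; linarith
  -- the key inequality for each truncation level M with 2*t ≤ M
  have key : ∀ M : ℕ, 2*t ≤ M →
      (P ({ω | t*(2*σ) ≤ |f (Y ω)|} ∩ {ω | Y ω ∈ Metric.closedBall 0 (M:ℝ)})).toReal ^ lam *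
      (P ({ω | |f (Y ω)| ≤ 2*σ} ∩ {ω | Y ω ∈ Metric.closedBall 0 (M:ℝ)})).toReal ^ (1-lam) ≤
      (P {ω | 2*σ ≤ |f (Y ω)|}).toReal := by
    intro M hM
    set K : Set (Fin n → ℝ) := {x | t*(2*σ) ≤ |f x|} ∩ Metric.closedBall 0 (M:ℝ) with hK
    set L : Set (Fin n → ℝ) := {x | |f x| ≤ 2*σ} ∩ Metric.closedBall 0 (M:ℝ) with hL
    have hMnn : (0:ℝ) ≤ M := Nat.cast_nonneg M
    have hKclosed : IsClosed {x : Fin n → ℝ | t*(2*σ) ≤ |f x|} :=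
      isClosed_le continuous_const hcont.abs
    have hLclosed : IsClosed {x : Fin n → ℝ | |f x| ≤ 2*σ} :=
      isClosed_le hcont.abs continuous_const
    have hKcomp : IsCompact K := (isCompact_closedBall _ _).inter_left hKclosed
    have hLcomp : IsCompact L := (isCompact_closedBall _ _).inter_left hLclosed
    have hsnorm : ∀ j, |s j| ≤ σ := by
      intro j
      have h1 : (s j)^2 ≤ σ^2 := by
        rw [← hs2]
        exact Finset.single_le_sum (f := fun j => (s j)^2) (fun j _ => sq_nonneg _)
          (Finset.mem_univ j)
      nlinarith [abs_nonneg (s j), sq_abs (s j)]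
    have hKne : K.Nonempty := by
      refine ⟨(t*(2*σ)/σ^2) • s, ?_, ?_⟩
      · show t*(2*σ) ≤ |f ((t*(2*σ)/σ^2) • s)|
        have : f ((t*(2*σ)/σ^2) • s) = t*(2*σ) := by
          simp only [hf, Pi.smul_apply, smul_eq_mul]
          have e1 : ∑ j : Fin n, s j * (t*(2*σ)/σ^2 * s j) = t*(2*σ)/σ^2 * ∑ j, (s j)^2 := by
            rw [Finset.mul_sum]
            exact Finset.sum_congr rfl fun j _ => by ring
          rw [e1, hs2]
          field_simp
        rw [this, abs_of_nonneg (by positivity)]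
      · rw [Metric.mem_closedBall, dist_zero_right]
        have : ‖(t*(2*σ)/σ^2) • s‖ ≤ (t*(2*σ)/σ^2) * σ := by
          rw [norm_smul]
          have hns : ‖s‖ ≤ σ := by
            apply (pi_norm_le_iff_of_nonneg hσ.le).mpr
            intro j
            rw [Real.norm_eq_abs]
            exact hsnorm j
          have hcpos : (0:ℝ) ≤ t*(2*σ)/σ^2 := by positivity
          rw [Real.norm_eq_abs, abs_of_nonneg hcpos]
          exact mul_le_mul_of_nonneg_left hns hcpos
        calc ‖(t*(2*σ)/σ^2) • s‖ ≤ (t*(2*σ)/σ^2) * σ := this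
          _ = 2*t := by field_simp
          _ ≤ M := hM
    have hLne : L.Nonempty := by
      refine ⟨0, ?_, ?_⟩
      · show |f 0| ≤ 2*σ
        have : f 0 = 0 := by simp [hf]
        rw [this, abs_zero]; positivity
      · rw [Metric.mem_closedBall, dist_zero_right]; simpa using hMnn
    have hincl : lam • K + (1 - lam) • L ⊆ {x | 2*σ ≤ |f x|} := by
      rintro z ⟨a, ha, b, hb, rfl⟩
      obtain ⟨u, hu, rfl⟩ := ha
      obtain ⟨v, hv, rfl⟩ := hb
      have hfu : t*(2*σ) ≤ |f u| := hu.1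
      have hfv : |f v| ≤ 2*σ := hv.1
      have hlin : f (lam • u + (1-lam) • v) = lam * f u + (1-lam) * f v := by
        simp only [hf, Pi.add_apply, Pi.smul_apply, smul_eq_mul]
        rw [Finset.mul_sum, Finset.mul_sum, ← Finset.sum_add_distrib]
        exact Finset.sum_congr rfl fun j _ => by ring
      show 2*σ ≤ |f (lam • u + (1-lam) • v)|
      rw [hlin]
      have habs : |lam * f u| - |(1-lam) * f v| ≤ |lam * f u + (1-lam) * f v| := by
        have := abs_add_le (lam * f u + (1-lam) * f v) (-((1-lam) * f v))
        simp only [add_neg_cancel_right, abs_neg] at this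
        linarith
      rw [abs_mul, abs_mul, abs_of_nonneg hlam_pos.le, abs_of_nonneg (by linarith : (0:ℝ) ≤ 1 - lam)] at habs
      have h1 : lam * (t*(2*σ)) ≤ lam * |f u| := by
        apply mul_le_mul_of_nonneg_left hfu hlam_pos.le
      have h2 : (1-lam) * |f v| ≤ (1-lam) * (2*σ) := by
        apply mul_le_mul_of_nonneg_left hfv (by linarith)
      have hcomb : lam * (t*(2*σ)) - (1-lam) * (2*σ) = 2*σ := by
        rw [hlam_def]; field_simp; ring
      linarith
    have hap := hlc K L hKne hLne hKcomp hLcomp lam ⟨hlam_pos.le, hlam_le⟩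
    have hsub : {ω | Y ω ∈ lam • K + (1 - lam) • L} ⊆ {ω | 2*σ ≤ |f (Y ω)|} :=
      fun ω hω => hincl hω
    have hle : P {ω | Y ω ∈ K} ^ lam * P {ω | Y ω ∈ L} ^ (1-lam) ≤ P {ω | 2*σ ≤ |f (Y ω)|} :=
      le_trans hap (measure_mono hsub)
    have hKev : {ω | Y ω ∈ K} = {ω | t*(2*σ) ≤ |f (Y ω)|} ∩ {ω | Y ω ∈ Metric.closedBall 0 (M:ℝ)} := by
      ext ω; simp [hK, Set.mem_inter_iff]
    have hLev : {ω | Y ω ∈ L} = {ω | |f (Y ω)| ≤ 2*σ} ∩ {ω | Y ω ∈ Metric.closedBall 0 (M:ℝ)} := by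
      ext ω; simp [hL, Set.mem_inter_iff]
    rw [hKev, hLev] at hle
    -- convert to reals
    have h1 : ∀ E : Set Ω, P E ≠ ⊤ := fun E => measure_ne_top P E
    calc (P ({ω | t*(2*σ) ≤ |f (Y ω)|} ∩ {ω | Y ω ∈ Metric.closedBall 0 (M:ℝ)})).toReal ^ lam *
        (P ({ω | |f (Y ω)| ≤ 2*σ} ∩ {ω | Y ω ∈ Metric.closedBall 0 (M:ℝ)})).toReal ^ (1-lam)
        = ((P ({ω | t*(2*σ) ≤ |f (Y ω)|} ∩ {ω | Y ω ∈ Metric.closedBall 0 (M:ℝ)})) ^ lam *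
           (P ({ω | |f (Y ω)| ≤ 2*σ} ∩ {ω | Y ω ∈ Metric.closedBall 0 (M:ℝ)})) ^ (1-lam)).toReal := by
          rw [ENNReal.toReal_mul, ENNReal.toReal_rpow, ENNReal.toReal_rpow]
      _ ≤ (P {ω | 2*σ ≤ |f (Y ω)|}).toReal := by
          apply ENNReal.toReal_mono (h1 _) hle
  -- pass to the limit M → ∞
  set S : ℕ → Set Ω := fun M => {ω | t*(2*σ) ≤ |f (Y ω)|} ∩ {ω | Y ω ∈ Metric.closedBall 0 (M:ℝ)} with hS
  set T : ℕ → Set Ω := fun M => {ω | |f (Y ω)| ≤ 2*σ} ∩ {ω | Y ω ∈ Metric.closedBall 0 (M:ℝ)} with hT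
  have hball : ∀ {M N : ℕ}, M ≤ N → {ω | Y ω ∈ Metric.closedBall (0:Fin n → ℝ) (M:ℝ)} ⊆
      {ω | Y ω ∈ Metric.closedBall (0:Fin n → ℝ) (N:ℝ)} :=
    fun {M N} h ω hω => Metric.closedBall_subset_closedBall (Nat.cast_le.mpr h) hω
  have hmonoS : Monotone S := fun M N h => Set.inter_subset_inter_right _ (hball h)
  have hmonoT : Monotone T := fun M N h => Set.inter_subset_inter_right _ (hball h)
  have hUS : ⋃ M, S M = {ω | t*(2*σ) ≤ |f (Y ω)|} := by
    ext ω
    simp only [hS, Set.mem_iUnion, Set.mem_inter_iff, Set.mem_setOf_eq, Metric.mem_closedBall,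
      dist_zero_right]
    constructor
    · rintro ⟨M, h1, _⟩; exact h1
    · intro h
      obtain ⟨M, hM⟩ := exists_nat_ge ‖Y ω‖
      exact ⟨M, h, hM⟩
  have hUT : ⋃ M, T M = {ω | |f (Y ω)| ≤ 2*σ} := by
    ext ω
    simp only [hT, Set.mem_iUnion, Set.mem_inter_iff, Set.mem_setOf_eq, Metric.mem_closedBall,
      dist_zero_right]
    constructor
    · rintro ⟨M, h1, _⟩; exact h1
    · intro h
      obtain ⟨M, hM⟩ := exists_nat_ge ‖Y ω‖
      exact ⟨M, h, hM⟩
  have htS := tendsto_measure_iUnion_atTop (μ := P) hmonoS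
  have htT := tendsto_measure_iUnion_atTop (μ := P) hmonoT
  rw [hUS] at htS
  rw [hUT] at htT
  have htS' : Filter.Tendsto (fun M => (P (S M)).toReal) Filter.atTop
      (nhds (P {ω | t*(2*σ) ≤ |f (Y ω)|}).toReal) :=
    (ENNReal.tendsto_toReal (measure_ne_top P _)).comp htS
  have htT' : Filter.Tendsto (fun M => (P (T M)).toReal) Filter.atTop
      (nhds (P {ω | |f (Y ω)| ≤ 2*σ}).toReal) :=
    (ENNReal.tendsto_toReal (measure_ne_top P _)).comp htT
  have hprod : Filter.Tendsto
      (fun M => (P (S M)).toReal ^ lam * (P (T M)).toReal ^ (1-lam)) Filter.atTop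
      (nhds ((P {ω | t*(2*σ) ≤ |f (Y ω)|}).toReal ^ lam *
        (P {ω | |f (Y ω)| ≤ 2*σ}).toReal ^ (1-lam))) :=
    (htS'.rpow_const (Or.inr hlam_pos.le)).mul (htT'.rpow_const (Or.inr (by linarith)))
  have hlim : (P {ω | t*(2*σ) ≤ |f (Y ω)|}).toReal ^ lam *
      (P {ω | |f (Y ω)| ≤ 2*σ}).toReal ^ (1-lam) ≤ (P {ω | 2*σ ≤ |f (Y ω)|}).toReal := by
    apply le_of_tendsto hprod
    rw [Filter.eventually_atTop]
    refine ⟨⌈2*t⌉₊, fun M hM => key M (le_trans (Nat.le_ceil _) (Nat.cast_le.mpr hM))⟩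
  -- now the arithmetic
  have hA' : (P {ω | 2*σ ≤ |f (Y ω)|}).toReal ≤ 1/4 := hA
  have hB' : 3/4 ≤ (P {ω | |f (Y ω)| ≤ 2*σ}).toReal := hB
  set pt := (P {ω | t*(2*σ) ≤ |f (Y ω)|}).toReal with hpt_def
  set b := (P {ω | |f (Y ω)| ≤ 2*σ}).toReal with hb_def
  have hpt_nonneg : 0 ≤ pt := ENNReal.toReal_nonneg
  have h34 : (3/4:ℝ) ≤ b ^ (1-lam) := by
    calc (3/4:ℝ) = (3/4:ℝ)^(1:ℝ) := (Real.rpow_one _).symm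
    _ ≤ (3/4:ℝ)^(1-lam) := Real.rpow_le_rpow_of_exponent_ge (by norm_num) (by norm_num)
        (by linarith)
    _ ≤ b^(1-lam) := Real.rpow_le_rpow (by norm_num) hB' (by linarith)
  have hptlam : pt ^ lam ≤ 1/3 := by
    have h0 : 0 ≤ pt ^ lam := Real.rpow_nonneg hpt_nonneg lam
    nlinarith [mul_le_mul_of_nonneg_left h34 h0, hlim, hA']
  show pt ≤ (1/3:ℝ) ^ ((t+1)/2)
  calc pt = (pt^lam)^(1/lam) := by
        rw [← Real.rpow_mul hpt_nonneg, mul_one_div, div_self hlam_pos.ne', Real.rpow_one]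
    _ ≤ (1/3:ℝ)^(1/lam) := Real.rpow_le_rpow (Real.rpow_nonneg hpt_nonneg lam) hptlam
        (by positivity)
    _ = (1/3:ℝ)^((t+1)/2) := by rw [hlam_def, one_div_div]

lemma tail_bound (hY : Measurable Y) (hlc : IsLogConcave P Y) {σ : ℝ} (hσ : 0 < σ)
    (hs2 : ∑ j, (s j)^2 = σ^2)
    (hVar : ∫ ω, (∑ j, s j * Y ω j)^2 ∂P = σ^2)
    (hVint : Integrable (fun ω => (∑ j, s j * Y ω j)^2) P) (u : ℝ) :
    (P {ω | u ≤ |∑ j, s j * Y ω j|}).toReal ≤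
      Real.sqrt 3 * Real.exp (-(Real.log 3 / (4*σ)) * u) := by
  have hWm : Measurable (fun ω => ∑ j, s j * Y ω j) :=
    Finset.measurable_sum _ fun j _ => measurable_const.mul ((measurable_pi_apply j).comp hY)
  have hlog3 : (0:ℝ) ≤ Real.log 3 := Real.log_nonneg (by norm_num)
  have hsq3 : Real.sqrt 3 = Real.exp (Real.log 3 / 2) := by
    rw [Real.sqrt_eq_rpow, Real.rpow_def_of_pos (by norm_num)]
    ring_nf
  have hsq3_ge : (1:ℝ) ≤ Real.sqrt 3 := by
    rw [show (1:ℝ) = Real.sqrt 1 from (Real.sqrt_one).symm]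
    exact Real.sqrt_le_sqrt (by norm_num)
  -- Markov
  have hseteq : {ω | 2*σ ≤ |∑ j, s j * Y ω j|} = {ω | (2*σ)^2 ≤ (∑ j, s j * Y ω j)^2} := by
    ext ω
    simp only [Set.mem_setOf_eq]
    constructor
    · intro h; nlinarith [sq_abs (∑ j, s j * Y ω j), abs_nonneg (∑ j, s j * Y ω j)]
    · intro h; nlinarith [sq_abs (∑ j, s j * Y ω j), abs_nonneg (∑ j, s j * Y ω j)]
  have hmark := mul_meas_ge_le_integral_of_nonneg
    (Filter.Eventually.of_forall (fun ω => sq_nonneg (∑ j, s j * Y ω j))) hVint ((2*σ)^2)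
  rw [hVar] at hmark
  have hA : (P {ω | 2*σ ≤ |∑ j, s j * Y ω j|}).toReal ≤ 1/4 := by
    rw [hseteq]; rw [measureReal_def] at hmark
    nlinarith [hmark, ENNReal.toReal_nonneg (a := P {x | (2*σ)^2 ≤ (∑ j, s j * Y x j)^2}),
      mul_pos hσ hσ]
  have hmeasE : MeasurableSet {ω | 2*σ ≤ |∑ j, s j * Y ω j|} :=
    measurableSet_le measurable_const hWm.abs
  have hB : 3/4 ≤ (P {ω | |∑ j, s j * Y ω j| ≤ 2*σ}).toReal := by
    have hcompl : {ω | 2*σ ≤ |∑ j, s j * Y ω j|}ᶜ ⊆ {ω | |∑ j, s j * Y ω j| ≤ 2*σ} := by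
      intro ω h
      simp only [Set.mem_compl_iff, Set.mem_setOf_eq, not_le] at h
      exact h.le
    have h1 : (P {ω | 2*σ ≤ |∑ j, s j * Y ω j|}ᶜ).toReal
        = 1 - (P {ω | 2*σ ≤ |∑ j, s j * Y ω j|}).toReal := by
      rw [measure_compl hmeasE (measure_ne_top _ _), measure_univ,
        ENNReal.toReal_sub_of_le prob_le_one (by simp), ENNReal.toReal_one]
    have h2 : (P {ω | 2*σ ≤ |∑ j, s j * Y ω j|}ᶜ).toReal
        ≤ (P {ω | |∑ j, s j * Y ω j| ≤ 2*σ}).toReal :=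
      ENNReal.toReal_mono (measure_ne_top _ _) (measure_mono hcompl)
    linarith
  have hrw : ∀ x:ℝ, (1/3:ℝ)^x = Real.exp (-(Real.log 3)*x) := by
    intro x
    rw [Real.rpow_def_of_pos (by norm_num), one_div, Real.log_inv]
  by_cases hcase : 2*σ ≤ u
  · set t := u/(2*σ) with htdef
    have ht : 1 ≤ t := (one_le_div (by positivity)).mpr hcase
    have hueq : t*(2*σ) = u := by rw [htdef]; field_simp
    have hbc := borell_core hY hlc hσ hs2 hA hB ht
    rw [hueq] at hbc
    calc (P {ω | u ≤ |∑ j, s j * Y ω j|}).toReal ≤ (1/3:ℝ)^((t+1)/2) := hbc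
      _ ≤ (1/3:ℝ)^(t/2) := Real.rpow_le_rpow_of_exponent_ge (by norm_num) (by norm_num)
          (by linarith)
      _ = Real.exp (-(Real.log 3)*(t/2)) := hrw _
      _ = Real.exp (-(Real.log 3 / (4*σ)) * u) := by
          congr 1
          rw [htdef]
          field_simp
          ring
      _ ≤ Real.sqrt 3 * Real.exp (-(Real.log 3 / (4*σ)) * u) :=
          le_mul_of_one_le_left (Real.exp_nonneg _) hsq3_ge
  · push_neg at hcase
    have h1 : (P {ω | u ≤ |∑ j, s j * Y ω j|}).toReal ≤ 1 := by
      have := ENNReal.toReal_mono (a := P {ω | u ≤ |∑ j, s j * Y ω j|}) (b := 1)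
        (by simp) prob_le_one
      simpa using this
    have h2 : (1:ℝ) ≤ Real.sqrt 3 * Real.exp (-(Real.log 3 / (4*σ)) * u) := by
      have hstep : Real.exp (-(Real.log 3 / 2)) ≤ Real.exp (-(Real.log 3 / (4*σ)) * u) := by
        apply Real.exp_le_exp.mpr
        have heq : (-(Real.log 3 / (4*σ))) * u = -(Real.log 3 / (4*σ) * u) := by ring
        rw [heq]
        apply neg_le_neg
        calc Real.log 3 / (4*σ) * u ≤ Real.log 3 / (4*σ) * (2*σ) := by
              apply mul_le_mul_of_nonneg_left hcase.le (by positivity)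
          _ = Real.log 3 / 2 := by field_simp; ring
      calc (1:ℝ) = Real.exp (Real.log 3 / 2) * Real.exp (-(Real.log 3 / 2)) := by
            rw [← Real.exp_add]
            norm_num
        _ ≤ Real.exp (Real.log 3 / 2) * Real.exp (-(Real.log 3 / (4*σ)) * u) :=
            mul_le_mul_of_nonneg_left hstep (Real.exp_nonneg _)
        _ = Real.sqrt 3 * Real.exp (-(Real.log 3 / (4*σ)) * u) := by rw [hsq3]
    linarith

lemma moment_bound (hY : Measurable Y) (hlc : IsLogConcave P Y) {σ : ℝ} (hσ : 0 < σ)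
    (hs2 : ∑ j, (s j)^2 = σ^2)
    (hVar : ∫ ω, (∑ j, s j * Y ω j)^2 ∂P = σ^2)
    (hVint : Integrable (fun ω => (∑ j, s j * Y ω j)^2) P)
    {q : ℝ} (hq : 2 ≤ q) :
    ∫ ω, |∑ j, s j * Y ω j| ^ q ∂P ≤ (15*q)^q * σ^q := by
  have hq0 : (0:ℝ) < q := by linarith
  have hlog3 : (1:ℝ) ≤ Real.log 3 := by
    have h1 : Real.exp 1 ≤ 3 := by
      have := Real.exp_one_lt_d9
      linarith
    calc (1:ℝ) = Real.log (Real.exp 1) := (Real.log_exp 1).symm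
      _ ≤ Real.log 3 := Real.log_le_log (Real.exp_pos 1) h1
  have hlog3' : (0:ℝ) < Real.log 3 := by linarith
  set c : ℝ := Real.log 3 / (4*σ) with hc_def
  have hc : 0 < c := by positivity
  have hWm : Measurable (fun ω => ∑ j, s j * Y ω j) :=
    Finset.measurable_sum _ fun j _ => measurable_const.mul ((measurable_pi_apply j).comp hY)
  have hWq_m : Measurable (fun ω => |∑ j, s j * Y ω j| ^ q) := hWm.abs.pow measurable_const
  have hsqrt3 : (0:ℝ) < Real.sqrt 3 := Real.sqrt_pos.mpr (by norm_num)
  -- layer cake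
  have hlayer := MeasureTheory.lintegral_rpow_eq_lintegral_meas_lt_mul P
    (f := fun ω => |∑ j, s j * Y ω j|)
    (Filter.Eventually.of_forall fun ω => abs_nonneg _) hWm.abs.aemeasurable hq0
  -- tail bound in ENNReal
  have htail : ∀ u ∈ Ioi (0:ℝ), P {a | u < |∑ j, s j * Y a j|} ≤
      ENNReal.ofReal (Real.sqrt 3 * Real.exp (-c * u)) := by
    intro u _
    have h1 : P {a | u < |∑ j, s j * Y a j|} ≤ P {a | u ≤ |∑ j, s j * Y a j|} :=
      measure_mono fun a ha => le_of_lt (Set.mem_setOf_eq ▸ ha)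
    refine le_trans h1 ?_
    rw [ENNReal.le_ofReal_iff_toReal_le (measure_ne_top _ _) (by positivity)]
    exact tail_bound hY hlc hσ hs2 hVar hVint u
  -- pointwise bound of the integrand of the layer-cake integral
  have hpoint : ∀ u ∈ Ioi (0:ℝ),
      Real.sqrt 3 * Real.exp (-c * u) * u ^ (q-1) ≤
      Real.sqrt 3 * (2*q/c)^(q-1) * Real.exp (-(c/2) * u) := by
    intro u hu
    have hu0 : (0:ℝ) < u := hu
    have hq1 : (0:ℝ) < q - 1 := by linarith
    have hden : (0:ℝ) < 2*(q-1) := by linarith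
    have hx : (0:ℝ) < c*u/(2*(q-1)) := by positivity
    have h1 : u ^ (q-1) = (2*(q-1)/c)^(q-1) * (c*u/(2*(q-1)))^(q-1) := by
      rw [← Real.mul_rpow (by positivity) (by positivity)]
      congr 1
      field_simp
    have h2 : (c*u/(2*(q-1)))^(q-1) ≤ Real.exp ((c/2) * u) := by
      calc (c*u/(2*(q-1)))^(q-1) ≤ (Real.exp (c*u/(2*(q-1))))^(q-1) :=
          Real.rpow_le_rpow hx.le
            (by linarith [Real.add_one_le_exp (c*u/(2*(q-1)))]) hq1.le
        _ = Real.exp ((c*u/(2*(q-1))) * (q-1)) := (Real.exp_mul _ _).symm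
        _ = Real.exp ((c/2) * u) := by congr 1; field_simp
    have h3 : (2*(q-1)/c)^(q-1) ≤ (2*q/c)^(q-1) := by
      apply Real.rpow_le_rpow (by positivity) _ hq1.le
      gcongr
      linarith
    have h4 : u ^ (q-1) ≤ (2*q/c)^(q-1) * Real.exp ((c/2) * u) := by
      rw [h1]
      exact mul_le_mul h3 h2 (Real.rpow_nonneg hx.le _) (Real.rpow_nonneg (by positivity) _)
    have h5 : Real.exp (-c*u) * Real.exp ((c/2)*u) = Real.exp (-(c/2)*u) := by
      rw [← Real.exp_add]; congr 1; ring
    calc Real.sqrt 3 * Real.exp (-c * u) * u ^ (q-1)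
        ≤ Real.sqrt 3 * Real.exp (-c * u) * ((2*q/c)^(q-1) * Real.exp ((c/2) * u)) := by
          apply mul_le_mul_of_nonneg_left h4 (by positivity)
      _ = Real.sqrt 3 * (2*q/c)^(q-1) * (Real.exp (-c*u) * Real.exp ((c/2)*u)) := by ring
      _ = Real.sqrt 3 * (2*q/c)^(q-1) * Real.exp (-(c/2) * u) := by rw [h5]
  -- the value of the comparison integral
  have hval : ∫ u in Ioi (0:ℝ), Real.sqrt 3 * (2*q/c)^(q-1) * Real.exp (-(c/2) * u)
      = Real.sqrt 3 * (2*q/c)^(q-1) * (2/c) := by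
    rw [MeasureTheory.integral_const_mul]
    congr 1
    have := Real.integral_rpow_mul_exp_neg_mul_Ioi (a := 1) (r := c/2) one_pos (by positivity)
    simp only [sub_self, Real.rpow_zero, one_mul, Real.rpow_one, Real.Gamma_one, mul_one] at this
    rw [show (fun u:ℝ => Real.exp (-(c/2) * u)) = (fun u:ℝ => Real.exp (-(c/2 * u))) from
      funext fun u => by ring_nf, this]
    field_simp
  have hintexp : IntegrableOn (fun u => Real.sqrt 3 * (2*q/c)^(q-1) * Real.exp (-(c/2) * u))
      (Ioi (0:ℝ)) volume := by
    apply Integrable.const_mul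
    exact exp_neg_integrableOn_Ioi 0 (by positivity)
  -- bound the lintegral
  have hbound : ∫⁻ ω, ENNReal.ofReal (|∑ j, s j * Y ω j| ^ q) ∂P ≤
      ENNReal.ofReal (q * (Real.sqrt 3 * (2*q/c)^(q-1) * (2/c))) := by
    rw [hlayer]
    have step1 : ∫⁻ u in Ioi (0:ℝ), P {a | u < |∑ j, s j * Y a j|} * ENNReal.ofReal (u^(q-1))
        ≤ ∫⁻ u in Ioi (0:ℝ),
          ENNReal.ofReal (Real.sqrt 3 * (2*q/c)^(q-1) * Real.exp (-(c/2) * u)) := by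
      apply MeasureTheory.setLIntegral_mono' measurableSet_Ioi
      intro u hu
      calc P {a | u < |∑ j, s j * Y a j|} * ENNReal.ofReal (u^(q-1))
          ≤ ENNReal.ofReal (Real.sqrt 3 * Real.exp (-c * u)) * ENNReal.ofReal (u^(q-1)) :=
            mul_le_mul_left (htail u hu) _
        _ = ENNReal.ofReal (Real.sqrt 3 * Real.exp (-c * u) * u^(q-1)) :=
            (ENNReal.ofReal_mul (by positivity)).symm
        _ ≤ ENNReal.ofReal (Real.sqrt 3 * (2*q/c)^(q-1) * Real.exp (-(c/2) * u)) :=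
            ENNReal.ofReal_le_ofReal (hpoint u hu)
    have step2 : ∫⁻ u in Ioi (0:ℝ),
        ENNReal.ofReal (Real.sqrt 3 * (2*q/c)^(q-1) * Real.exp (-(c/2) * u))
        = ENNReal.ofReal (Real.sqrt 3 * (2*q/c)^(q-1) * (2/c)) := by
      rw [← MeasureTheory.ofReal_integral_eq_lintegral_ofReal hintexp
        (Filter.Eventually.of_forall fun u => by positivity), hval]
    calc ENNReal.ofReal q * ∫⁻ u in Ioi (0:ℝ),
          P {a | u < |∑ j, s j * Y a j|} * ENNReal.ofReal (u^(q-1))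
        ≤ ENNReal.ofReal q * ENNReal.ofReal (Real.sqrt 3 * (2*q/c)^(q-1) * (2/c)) := by
          apply mul_le_mul_right
          rw [← step2]
          exact step1
      _ = ENNReal.ofReal (q * (Real.sqrt 3 * (2*q/c)^(q-1) * (2/c))) :=
          (ENNReal.ofReal_mul hq0.le).symm
  -- numeric: q * (√3 * (2q/c)^(q-1) * (2/c)) ≤ (15q)^q * σ^q
  have hnum : q * (Real.sqrt 3 * (2*q/c)^(q-1) * (2/c)) ≤ (15*q)^q * σ^q := by
    have h2qc : (0:ℝ) < 2*q/c := by positivity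
    have e1 : q * (Real.sqrt 3 * (2*q/c)^(q-1) * (2/c)) = Real.sqrt 3 * (2*q/c)^q := by
      rw [show q = (q-1) + 1 by ring] at *
      rw [Real.rpow_add h2qc, Real.rpow_one]
      ring
    rw [e1]
    have e2 : 2*q/c = (8*q/Real.log 3) * σ := by
      rw [hc_def]; field_simp; ring
    have e3 : (2*q/c)^q = (8*q/Real.log 3)^q * σ^q := by
      rw [e2, Real.mul_rpow (by positivity) hσ.le]
    rw [e3]
    have h8 : (8*q/Real.log 3) ≤ 8*q := by
      rw [div_le_iff₀ hlog3']
      nlinarith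
    have h4 : (8*q/Real.log 3)^q ≤ (8*q)^q := Real.rpow_le_rpow (by positivity) h8 hq0.le
    have hsq2 : Real.sqrt 3 ≤ 2 := by
      rw [show (2:ℝ) = Real.sqrt 4 by
        rw [show (4:ℝ) = 2^2 by norm_num, Real.sqrt_sq (by norm_num : (0:ℝ) ≤ 2)]]
      exact Real.sqrt_le_sqrt (by norm_num)
    have h158 : (2:ℝ) ≤ (15/8:ℝ)^q := by
      calc (2:ℝ) ≤ (15/8:ℝ)^(2:ℝ) := by
            rw [show (2:ℝ) = ((2:ℕ):ℝ) by norm_num, Real.rpow_natCast]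
            norm_num
        _ ≤ (15/8:ℝ)^q := Real.rpow_le_rpow_of_exponent_le (by norm_num) hq
    have e4 : (15/8:ℝ)^q * (8*q)^q = (15*q)^q := by
      rw [← Real.mul_rpow (by norm_num) (by positivity)]
      congr 1
      ring
    calc Real.sqrt 3 * ((8*q/Real.log 3)^q * σ^q)
        ≤ 2 * ((8*q)^q * σ^q) := by
          apply mul_le_mul hsq2 (mul_le_mul_of_nonneg_right h4 (by positivity)) (by positivity)
            (by norm_num)
      _ ≤ (15/8:ℝ)^q * ((8*q)^q * σ^q) := by
          apply mul_le_mul_of_nonneg_right h158 (by positivity)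
      _ = (15*q)^q * σ^q := by rw [← mul_assoc, e4]
  have hfinal : ∫⁻ ω, ENNReal.ofReal (|∑ j, s j * Y ω j| ^ q) ∂P ≤
      ENNReal.ofReal ((15*q)^q * σ^q) :=
    le_trans hbound (ENNReal.ofReal_le_ofReal hnum)
  -- back to Bochner
  rw [MeasureTheory.integral_eq_lintegral_of_nonneg_ae
    (Filter.Eventually.of_forall fun ω => Real.rpow_nonneg (abs_nonneg _) q)
    hWq_m.aestronglyMeasurable]
  calc (∫⁻ ω, ENNReal.ofReal (|∑ j, s j * Y ω j| ^ q) ∂P).toReal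
      ≤ (ENNReal.ofReal ((15*q)^q * σ^q)).toReal :=
        ENNReal.toReal_mono ENNReal.ofReal_ne_top hfinal
    _ = (15*q)^q * σ^q := ENNReal.toReal_ofReal (by positivity)

lemma pNorm_nonneg' {ι : Type*} [Fintype ι] (r : ℝ) (x : ι → ℝ) : 0 ≤ pNorm r x :=
  Real.rpow_nonneg (Finset.sum_nonneg fun k _ => Real.rpow_nonneg (abs_nonneg _) r) _

lemma row_bound (hY : Measurable Y) (hlc : IsLogConcave P Y)
    (hiso : ∀ i j, ∫ ω, Y ω i * Y ω j ∂P = if i = j then 1 else 0)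
    (s : Fin n → ℝ) {q : ℝ} (hq : 2 ≤ q) :
    ∫ ω, |∑ j, s j * Y ω j| ^ q ∂P ≤ (15*q)^q * (∑ j, (s j)^2) ^ (q/2) := by
  obtain ⟨hVint, hVar⟩ := sq_sum_integral P hY hiso s
  rcases eq_or_lt_of_le (Finset.sum_nonneg fun j _ => sq_nonneg (s j)) with h0 | hpos
  · have hz : ∀ j, s j = 0 := by
      intro j
      have h := (Finset.sum_eq_zero_iff_of_nonneg (fun j _ => sq_nonneg (s j))).mp h0.symm j
        (Finset.mem_univ j)
      exact pow_eq_zero_iff two_ne_zero |>.mp h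
    have hzero : (fun ω => |∑ j, s j * Y ω j| ^ q) = (fun _ => (0:ℝ)) := by
      funext ω
      simp only [hz, zero_mul, Finset.sum_const_zero, abs_zero]
      exact Real.zero_rpow (by linarith)
    rw [hzero, integral_const]
    simp only [smul_eq_mul, mul_zero]
    positivity
  · set σ := Real.sqrt (∑ j, (s j)^2) with hσdef
    have hσ : 0 < σ := Real.sqrt_pos.mpr hpos
    have hs2 : ∑ j, (s j)^2 = σ^2 := (Real.sq_sqrt hpos.le).symm
    have hVar' : ∫ ω, (∑ j, s j * Y ω j)^2 ∂P = σ^2 := by rw [hVar, hs2]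
    have hmb := moment_bound hY hlc hσ hs2 hVar' hVint hq
    have hσq : σ^q = (∑ j, (s j)^2)^(q/2) := by
      rw [hσdef, Real.sqrt_eq_rpow, ← Real.rpow_mul hpos.le]
      congr 1
      ring
    rw [← hσq]
    exact hmb

theorem statement9 :
    ∃ C : ℝ, 0 < C ∧
      ∀ (m n : ℕ) (Ω : Type) [MeasurableSpace Ω] (P : Measure Ω), IsProbabilityMeasure P →
      ∀ Y : Fin m → Ω → (Fin n → ℝ),
        (∀ i, Measurable (Y i)) →
        iIndepFun Y P →
        (∀ i j, IdentDistrib (Y i) (Y j) P P) →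
        (∀ i, IsLogConcave P (Y i)) →
        (∀ i, IsIsotropic P (Y i)) →
      ∀ A : Fin m → Fin n → ℝ,
      ∀ p q p' : ℝ, 2 ≤ p → 2 ≤ q → 1 / p + 1 / p' = 1 →
      ∀ t : Fin n → ℝ, pNorm p' t ≤ 1 →
        (∑ i, ∫ ω, |∑ j, A i j * Y i ω j * t j| ^ q ∂P) ^ (1 / q) ≤
          C * q * ⨆ j, pNorm q (fun i => A i j) := by
  refine ⟨15, by norm_num, ?_⟩
  intro m n Ω _ P hP Y hYm _ _ hlc hiso A p q p' hp hq hpp' t ht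
  haveI := hP
  have hq0 : (0:ℝ) < q := by linarith
  -- facts about p'
  have hp0 : (0:ℝ) < p := by linarith
  have h1p : 1/p ≤ 1/2 := one_div_le_one_div_of_le (by norm_num) hp
  have hinv : (1:ℝ)/2 ≤ 1/p' := by linarith
  have hp'0 : (0:ℝ) < p' := by
    by_contra h
    push_neg at h
    have : 1/p' ≤ 0 := by
      rw [one_div]
      exact inv_nonpos.mpr h
    linarith
  have hp'2 : p' ≤ 2 := by
    have h2 : p' * (1/p') = 1 := by field_simp
    nlinarith
  -- ∑ t_j ^ 2 ≤ 1
  have hsum_p' : ∑ j, |t j| ^ p' ≤ 1 := by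
    have hnn : 0 ≤ ∑ j, |t j| ^ p' :=
      Finset.sum_nonneg fun j _ => Real.rpow_nonneg (abs_nonneg _) _
    calc ∑ j, |t j| ^ p' = ((∑ j, |t j| ^ p')^(1/p'))^p' := by
          rw [← Real.rpow_mul hnn, one_div, inv_mul_cancel₀ hp'0.ne', Real.rpow_one]
      _ ≤ 1^p' := Real.rpow_le_rpow (Real.rpow_nonneg hnn _) ht hp'0.le
      _ = 1 := Real.one_rpow _
  have hT : ∑ j, (t j)^2 ≤ 1 := by
    refine le_trans (Finset.sum_le_sum ?_) hsum_p'
    intro j _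
    rcases eq_or_lt_of_le (abs_nonneg (t j)) with h0 | h0
    · rw [← sq_abs, ← h0, Real.zero_rpow hp'0.ne']
      norm_num
    · have habs1 : |t j| ≤ 1 := by
        by_contra hgt
        push_neg at hgt
        have h1 : |t j| ^ p' ≤ 1 :=
          le_trans (Finset.single_le_sum
            (f := fun j => |t j| ^ p')
            (fun j _ => Real.rpow_nonneg (abs_nonneg _) _) (Finset.mem_univ j)) hsum_p'
        have h2 : (1:ℝ) < |t j| ^ p' :=
          Real.one_lt_rpow_iff_of_pos h0 |>.mpr (Or.inl ⟨hgt, hp'0⟩)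
        linarith
      calc (t j)^2 = |t j| ^ (2:ℝ) := by
            rw [← sq_abs]
            rw [show ((2:ℝ) = ((2:ℕ):ℝ)) by norm_num, Real.rpow_natCast]
        _ ≤ |t j| ^ p' := Real.rpow_le_rpow_of_exponent_ge h0 habs1 hp'2
  set S := ⨆ j, pNorm q (fun i => A i j) with hSdef
  have hS0 : 0 ≤ S := Real.iSup_nonneg fun j => pNorm_nonneg' q _
  -- column bound
  have hcol : ∀ j, ∑ i, |A i j| ^ q ≤ S^q := by
    intro j
    have h1 : pNorm q (fun i => A i j) ≤ S :=
      le_ciSup (f := fun j => pNorm q (fun i => A i j))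
        (Set.Finite.bddAbove (Set.finite_range _)) j
    have h2 : (pNorm q (fun i => A i j))^q = ∑ i, |A i j| ^ q := by
      rw [pNorm, ← Real.rpow_mul
        (Finset.sum_nonneg fun i _ => Real.rpow_nonneg (abs_nonneg _) _),
        one_div, inv_mul_cancel₀ hq0.ne', Real.rpow_one]
    rw [← h2]
    exact Real.rpow_le_rpow (pNorm_nonneg' q _) h1 hq0.le
  -- per-row bound
  have hrow : ∀ i, ∫ ω, |∑ j, A i j * Y i ω j * t j| ^ q ∂P
      ≤ (15*q)^q * ∑ j, (t j)^2 * |A i j| ^ q := by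
    intro i
    have hre : (fun ω => |∑ j, A i j * Y i ω j * t j| ^ q)
        = (fun ω => |∑ j, (A i j * t j) * Y i ω j| ^ q) := by
      funext ω
      congr 2
      exact Finset.sum_congr rfl fun j _ => by ring
    rw [hre]
    calc ∫ ω, |∑ j, (A i j * t j) * Y i ω j| ^ q ∂P
        ≤ (15*q)^q * (∑ j, (A i j * t j)^2) ^ (q/2) :=
          row_bound (hYm i) (hlc i) (hiso i).2 _ hq
      _ ≤ (15*q)^q * ∑ j, (t j)^2 * |A i j| ^ q := by
          apply mul_le_mul_of_nonneg_left _ (Real.rpow_nonneg (by linarith) q)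
          have hje := jensen_aux (fun j => (t j)^2) (fun j => (A i j)^2)
            (fun j => sq_nonneg _) (fun j => sq_nonneg _) hT (r := q/2) (by linarith)
          have he1 : ∑ j, (A i j * t j)^2 = ∑ j, (t j)^2 * (A i j)^2 := by
            exact Finset.sum_congr rfl fun j _ => by ring
          have he2 : ∀ j, ((A i j)^2) ^ (q/2 : ℝ) = |A i j| ^ q := by
            intro j
            rw [← sq_abs, show (((|A i j|)^2 : ℝ) = |A i j| ^ ((2:ℕ):ℝ)) from
              (Real.rpow_natCast _ 2).symm, ← Real.rpow_mul (abs_nonneg _)]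
            norm_num
            congr 1
            ring
          rw [he1]
          refine le_trans hje (le_of_eq ?_)
          exact Finset.sum_congr rfl fun j _ => by rw [he2]
  -- sum over i
  have hsum : ∑ i, ∫ ω, |∑ j, A i j * Y i ω j * t j| ^ q ∂P ≤ (15*q)^q * S^q := by
    calc ∑ i, ∫ ω, |∑ j, A i j * Y i ω j * t j| ^ q ∂P
        ≤ ∑ i, (15*q)^q * ∑ j, (t j)^2 * |A i j| ^ q :=
          Finset.sum_le_sum fun i _ => hrow i
      _ = (15*q)^q * ∑ j, (t j)^2 * ∑ i, |A i j| ^ q := by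
          rw [← Finset.mul_sum]
          congr 1
          rw [Finset.sum_comm]
          exact Finset.sum_congr rfl fun j _ => by rw [Finset.mul_sum]
      _ ≤ (15*q)^q * ∑ j, (t j)^2 * S^q := by
          apply mul_le_mul_of_nonneg_left _ (Real.rpow_nonneg (by linarith) q)
          exact Finset.sum_le_sum fun j _ =>
            mul_le_mul_of_nonneg_left (hcol j) (sq_nonneg _)
      _ = (15*q)^q * (S^q * ∑ j, (t j)^2) := by
          rw [← Finset.sum_mul]
          ring
      _ ≤ (15*q)^q * (S^q * 1) := by
          apply mul_le_mul_of_nonneg_left _ (Real.rpow_nonneg (by linarith) q)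
          exact mul_le_mul_of_nonneg_left hT (Real.rpow_nonneg hS0 q)
      _ = (15*q)^q * S^q := by ring
  have hsum_nn : 0 ≤ ∑ i, ∫ ω, |∑ j, A i j * Y i ω j * t j| ^ q ∂P :=
    Finset.sum_nonneg fun i _ => integral_nonneg fun ω => Real.rpow_nonneg (abs_nonneg _) q
  calc (∑ i, ∫ ω, |∑ j, A i j * Y i ω j * t j| ^ q ∂P) ^ (1/q)
      ≤ ((15*q)^q * S^q) ^ (1/q) := Real.rpow_le_rpow hsum_nn hsum (one_div_nonneg.mpr hq0.le)
    _ = 15 * q * S := by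
        rw [← Real.mul_rpow (by linarith) hS0,
          ← Real.rpow_mul (mul_nonneg (by linarith) hS0), mul_one_div, div_self hq0.ne',
          Real.rpow_one]

end
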